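/- arXiv:2304.02783 — 3 statements merged into one kernel-verified Lean document; each statement's English description precedes it below -/
import Mathlib

section
/- For u_n = Σ_{k=1}^{n} Ẽ_{kk} in B(ℓ² ⊗ ℂ²) (where Ẽ_{kk} = E_{kk} ⊗ [[1,k],[0,0]]), the operator norm of u_n equals √(1+n²), while the norm of E₁₁ + ⋯ + E_{nn} in B(ℓ²) equals 1. In particular, the map Ẽ_{ij} ↦ E_{ij} is not bounded below. -/
open Matrix Kronecker

/-- `Ẽ_{kk} = E_{kk} ⊗ [[1, k],[0,0]]` via the Kronecker product, with `k : Fin n`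
interpreted as the natural number `k + 1`. -/
def Etilde (N : ℕ) (i j : Fin N) : Matrix (Fin N × Fin 2) (Fin N × Fin 2) ℂ :=
  (single i j (1 : ℂ)) ⊗ₖ !![1, ((j : ℕ) + 1 : ℂ); 0, 0]

lemma mulVec_sum (n : ℕ) (x : (Fin n × Fin 2) → ℂ) (i : Fin n) (s : Fin 2) :
    ((∑ k : Fin n, Etilde n k k).mulVec x) (i, s) =
      if s = 0 then x (i,0) + (((i:ℕ):ℂ)+1) * x (i,1) else 0 := by
  simp only [Etilde, Matrix.mulVec, dotProduct, Matrix.sum_apply, kroneckerMap_apply,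
    Fintype.sum_prod_type, Fin.sum_univ_two, Finset.sum_mul, Finset.sum_add_distrib]
  fin_cases s <;> simp [Matrix.single, ite_and, Finset.sum_ite_eq', mul_comm]

lemma cs_aux (a b z : ℂ) :
    ‖a + z * b‖ ^ 2 ≤ (1 + ‖z‖ ^ 2) * (‖a‖ ^ 2 + ‖b‖ ^ 2) := by
  have h := norm_add_le a (z * b)
  rw [norm_mul] at h
  nlinarith [norm_nonneg a, norm_nonneg b, norm_nonneg z, norm_nonneg (a + z*b),
    sq_nonneg (‖z‖*‖a‖ - ‖b‖)]


/-- The operator norm of `u_n = Σ_{k=1}^n Ẽ_{kk}` equals `√(1+n²)`, while the norm of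
`E₁₁ + ⋯ + E_{nn}` equals `1`; in particular the map `Ẽ_{ij} ↦ E_{ij}` is not bounded
below. -/
theorem stmt_7 (n : ℕ) (hn : 1 ≤ n) :
    ‖Matrix.toEuclideanCLM (𝕜 := ℂ) (n := Fin n × Fin 2) (∑ k : Fin n, Etilde n k k)‖ =
      Real.sqrt (1 + (n : ℝ) ^ 2) ∧
    ‖Matrix.toEuclideanCLM (𝕜 := ℂ) (n := Fin n)
        (∑ k : Fin n, single k k (1 : ℂ))‖ = 1 := by
  constructor
  · set f := Matrix.toEuclideanCLM (𝕜 := ℂ) (n := Fin n × Fin 2) (∑ k : Fin n, Etilde n k k) with hf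
    have hfapp : ∀ (x : EuclideanSpace ℂ (Fin n × Fin 2)) (i : Fin n) (s : Fin 2),
        f x (i, s) = if s = 0 then x (i,0) + (((i:ℕ):ℂ)+1) * x (i,1) else 0 :=
      fun x i s => mulVec_sum n x i s
    have hs : (0:ℝ) < 1 + (n:ℝ)^2 := by positivity
    have hsq : Real.sqrt (1 + (n:ℝ)^2) * Real.sqrt (1 + (n:ℝ)^2) = 1 + (n:ℝ)^2 :=
      Real.mul_self_sqrt hs.le
    apply le_antisymm
    · -- upper bound
      apply ContinuousLinearMap.opNorm_le_bound _ (Real.sqrt_nonneg _)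
      intro x
      rw [EuclideanSpace.norm_eq, EuclideanSpace.norm_eq, ← Real.sqrt_mul hs.le]
      apply Real.sqrt_le_sqrt
      calc ∑ p : Fin n × Fin 2, ‖f x p‖ ^ 2
          = ∑ i : Fin n, ‖x (i,0) + (((i:ℕ):ℂ)+1) * x (i,1)‖ ^ 2 := by
            rw [Fintype.sum_prod_type]
            refine Finset.sum_congr rfl fun i _ => ?_
            rw [Fin.sum_univ_two, hfapp x i 0, hfapp x i 1]
            simp
        _ ≤ ∑ i : Fin n, (1 + (n:ℝ)^2) * (‖x (i,0)‖^2 + ‖x (i,1)‖^2) := by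
            refine Finset.sum_le_sum fun i _ => ?_
            have hz : ‖(((i:ℕ):ℂ) + 1)‖ = ((i:ℕ):ℝ) + 1 := by
              rw [show (((i:ℕ):ℂ) + 1) = (((i:ℕ) + 1 : ℕ) : ℂ) by push_cast; ring,
                Complex.norm_natCast]
              push_cast; ring
            have := cs_aux (x (i,0)) (x (i,1)) (((i:ℕ):ℂ) + 1)
            rw [hz] at this
            refine le_trans this ?_
            have hile : ((i:ℕ):ℝ) + 1 ≤ (n:ℝ) := by
              have := i.2; exact_mod_cast Nat.succ_le_of_lt this
            have : (((i:ℕ):ℝ) + 1)^2 ≤ (n:ℝ)^2 := by nlinarith [Nat.cast_nonneg (α := ℝ) (i:ℕ)]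
            nlinarith [norm_nonneg (x (i,0)), norm_nonneg (x (i,1)), sq_nonneg (‖x (i,0)‖), sq_nonneg (‖x (i,1)‖)]
        _ = (1 + (n:ℝ)^2) * ∑ p : Fin n × Fin 2, ‖x p‖ ^ 2 := by
            rw [Fintype.sum_prod_type, Finset.mul_sum]
            refine Finset.sum_congr rfl fun i _ => ?_
            rw [Fin.sum_univ_two]
    · -- lower bound
      set i0 : Fin n := ⟨n-1, Nat.sub_lt hn one_pos⟩ with hi0
      have hi0n : ((i0:ℕ):ℂ) + 1 = (n:ℂ) := by
        have : (i0:ℕ) + 1 = n := Nat.succ_pred_eq_of_pos hn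
        exact_mod_cast congrArg (Nat.cast (R := ℂ)) this
      set x0 : EuclideanSpace ℂ (Fin n × Fin 2) :=
        (WithLp.equiv 2 _).symm (fun p => if p.1 = i0 then (if p.2 = 0 then 1 else (n:ℂ)) else 0) with hx0
      have hx0app : ∀ p, x0 p = if p.1 = i0 then (if p.2 = 0 then 1 else (n:ℂ)) else 0 := fun p => rfl
      have hnx0 : ‖x0‖ = Real.sqrt (1 + (n:ℝ)^2) := by
        rw [EuclideanSpace.norm_eq]
        congr 1
        rw [Fintype.sum_prod_type]
        rw [Finset.sum_eq_single i0]
        · rw [Fin.sum_univ_two, hx0app, hx0app]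
          simp
        · intro j _ hj
          rw [Fin.sum_univ_two, hx0app, hx0app]
          simp [hj]
        · simp
      have hnfx0 : ‖f x0‖ = 1 + (n:ℝ)^2 := by
        rw [EuclideanSpace.norm_eq]
        have : ∑ p : Fin n × Fin 2, ‖f x0 p‖ ^ 2 = (1 + (n:ℝ)^2)^2 := by
          rw [Fintype.sum_prod_type, Finset.sum_eq_single i0]
          · rw [Fin.sum_univ_two, hfapp, hfapp]
            simp only [hx0app]
            simp [hi0n]
            rw [show (1 : ℂ) + (n:ℂ) * (n:ℂ) = ((1 + (n:ℝ)^2 : ℝ) : ℂ) by push_cast; ring,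
              Complex.norm_real, Real.norm_eq_abs, abs_of_pos hs]
          · intro j _ hj
            rw [Fin.sum_univ_two, hfapp, hfapp]
            simp only [hx0app]
            simp [hj]
          · simp
        rw [this, Real.sqrt_sq hs.le]
      have hle := f.le_opNorm x0
      rw [hnfx0, hnx0] at hle
      have hpos : 0 < Real.sqrt (1 + (n:ℝ)^2) := Real.sqrt_pos.mpr hs
      calc Real.sqrt (1 + (n:ℝ)^2) = (1 + (n:ℝ)^2) / Real.sqrt (1 + (n:ℝ)^2) := by
            field_simp [hsq]
            rw [Real.sq_sqrt hs.le]
        _ ≤ ‖f‖ := by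
            rw [div_le_iff₀ hpos]; exact hle
  · have h1 : (∑ k : Fin n, single k k (1 : ℂ)) = 1 := by
      ext i j
      by_cases h : i = j <;>
        simp [Matrix.sum_apply, Matrix.single, Matrix.one_apply, ite_and, h]
    rw [h1, _root_.map_one]
    haveI : Nonempty (Fin n) := ⟨⟨0, hn⟩⟩
    exact norm_one
end

section
/- If C and B are commuting C*-subalgebras of B(H) and B is simple, then the multiplication map μ : C ⊙ B → B(H), c ⊗ b ↦ cb (defined on the algebraic tensor product) is injective. -/
open scoped TensorProduct

set_option linter.unusedSectionVars false

namespace Stmt8Aux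

variable {A : Type*} [NormedRing A] [NormedAlgebra ℂ A] [StarRing A] [StarModule ℂ A]

/-- `act L z = ∑ (x,y) ∈ L, x * z * y`. -/
def act : List (A × A) → A → A
  | [], _ => 0
  | p :: L, z => p.1 * z * p.2 + act L z

@[simp] lemma act_nil (z : A) : act [] z = 0 := rfl

@[simp] lemma act_cons (p : A × A) (L : List (A × A)) (z : A) :
    act (p :: L) z = p.1 * z * p.2 + act L z := rfl

lemma act_append (L₁ L₂ : List (A × A)) (z : A) :
    act (L₁ ++ L₂) z = act L₁ z + act L₂ z := by
  induction L₁ with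
  | nil => simp
  | cons p L ih => simp [ih, add_assoc]

@[simp] lemma act_zero (L : List (A × A)) : act L (0 : A) = 0 := by
  induction L with
  | nil => simp
  | cons p L ih => simp [ih]

lemma act_add (L : List (A × A)) (z w : A) : act L (z + w) = act L z + act L w := by
  induction L with
  | nil => simp
  | cons p L ih => simp [ih, mul_add, add_mul]; abel

lemma act_sum {ι : Type*} (L : List (A × A)) (s : Finset ι) (f : ι → A) :
    act L (∑ i ∈ s, f i) = ∑ i ∈ s, act L (f i) := by
  classical
  induction s using Finset.induction_on with
  | empty => simp
  | insert a s hns ih => simp [Finset.sum_insert hns, act_add, ih]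

lemma act_map_mulLeft (w : A) (L : List (A × A)) (z : A) :
    act (L.map fun p => (w * p.1, p.2)) z = w * act L z := by
  induction L with
  | nil => simp
  | cons p L ih => simp [ih, mul_add, mul_assoc]

lemma act_map_smulLeft (c : ℂ) (L : List (A × A)) (z : A) :
    act (L.map fun p => (c • p.1, p.2)) z = c • act L z := by
  induction L with
  | nil => simp
  | cons p L ih => simp [ih, smul_add, smul_mul_assoc]

lemma act_map_negLeft (w : A) (L : List (A × A)) (z : A) :
    act (L.map fun p => (-(w * p.1), p.2)) z = -(w * act L z) := by
  induction L with
  | nil => simp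
  | cons p L ih => simp [ih, mul_add, mul_assoc]; abel

lemma act_map_negMulRight (x : A) (L : List (A × A)) (z : A) :
    act (L.map fun p => (-p.1, p.2 * x)) z = -(act L z * x) := by
  induction L with
  | nil => simp
  | cons p L ih => simp [ih, add_mul, mul_assoc]; abel

lemma act_map_mulRight (x : A) (L : List (A × A)) (z : A) :
    act (L.map fun p => (p.1, p.2 * x)) z = act L z * x := by
  induction L with
  | nil => simp
  | cons p L ih => simp [ih, add_mul, mul_assoc]

lemma act_mul_left_comm {c : A} (L : List (A × A)) (hc : ∀ p ∈ L, p.1 * c = c * p.1) (z : A) :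
    act L (c * z) = c * act L z := by
  induction L with
  | nil => simp
  | cons p L ih =>
    have h1 : p.1 * c = c * p.1 := hc p (List.mem_cons_self)
    have := ih (fun q hq => hc q (List.mem_cons_of_mem _ hq))
    simp only [act_cons, this, mul_add]
    rw [← mul_assoc, ← mul_assoc, h1, mul_assoc c]

def compL : List (A × A) → List (A × A) → List (A × A)
  | [], _ => []
  | p :: l, L₂ => (L₂.map fun q => (p.1 * q.1, q.2 * p.2)) ++ compL l L₂

lemma act_map_conj (p : A × A) (L₂ : List (A × A)) (z : A) :
    act (L₂.map fun q => (p.1 * q.1, q.2 * p.2)) z = p.1 * act L₂ z * p.2 := by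
  induction L₂ with
  | nil => simp
  | cons q L ih => simp [ih, mul_add, add_mul, mul_assoc]

lemma act_compL (L₁ L₂ : List (A × A)) (z : A) :
    act (compL L₁ L₂) z = act L₁ (act L₂ z) := by
  induction L₁ with
  | nil => simp [compL]
  | cons p L ih => simp [compL, act_append, act_map_conj, ih]

lemma act_join (Ls : List (List (A × A))) (z : A) :
    act Ls.flatten z = (Ls.map (fun l => act l z)).sum := by
  induction Ls with
  | nil => simp
  | cons l Ls ih => simp [act_append, ih]

variable (B : StarSubalgebra ℂ A)

/-- All entries of `L` lie in `B`. -/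
def good (L : List (A × A)) : Prop := ∀ p ∈ L, p.1 ∈ B ∧ p.2 ∈ B

lemma good_nil : good B ([] : List (A × A)) := by intro p hp; simp at hp

lemma good_append {L₁ L₂ : List (A × A)} (h₁ : good B L₁) (h₂ : good B L₂) :
    good B (L₁ ++ L₂) := by
  intro p hp
  rcases List.mem_append.mp hp with h | h
  · exact h₁ p h
  · exact h₂ p h

lemma good_compL {L₁ L₂ : List (A × A)} (h₁ : good B L₁) (h₂ : good B L₂) :
    good B (compL L₁ L₂) := by
  induction L₁ with
  | nil => exact good_nil B
  | cons p L ih =>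
    refine good_append B ?_ (ih fun q hq => h₁ q (List.mem_cons_of_mem _ hq))
    intro q hq
    obtain ⟨r, hr, rfl⟩ := List.mem_map.mp hq
    obtain ⟨h2a, h2b⟩ := h₂ r hr
    obtain ⟨h1a, h1b⟩ := h₁ p (List.mem_cons_self)
    exact ⟨mul_mem h1a h2a, mul_mem h2b h1b⟩

lemma act_mem {L : List (A × A)} (hL : good B L) {z : A} (hz : z ∈ B) : act L z ∈ B := by
  induction L with
  | nil => simpa using zero_mem B
  | cons p L ih =>
    obtain ⟨h1, h2⟩ := hL p (List.mem_cons_self)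
    exact add_mem (mul_mem (mul_mem h1 hz) h2) (ih fun q hq => hL q (List.mem_cons_of_mem _ hq))

variable [CompleteSpace A]

lemma exists_act_one (hBclosed : IsClosed (B : Set A))
    (hsimple : ∀ I : TwoSidedIdeal B, IsClosed (I : Set B) → I = ⊥ ∨ I = ⊤)
    {b : A} (hb : b ∈ B) (hb0 : b ≠ 0) :
    ∃ L, good B L ∧ act L b = 1 := by
  classical
  set S : Set A := {z | ∃ L, good B L ∧ act L b = z} with hS
  have hSsub : S ⊆ (B : Set A) := by
    rintro z ⟨L, hL, rfl⟩
    exact act_mem B hL hb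
  have hbS : b ∈ S := ⟨[(1, 1)], by intro p hp; simp at hp; simp [hp, one_mem], by simp⟩
  -- S is a submodule
  let T : Submodule ℂ A :=
    { carrier := S
      add_mem' := by
        rintro x y ⟨L₁, h₁, rfl⟩ ⟨L₂, h₂, rfl⟩
        exact ⟨L₁ ++ L₂, good_append B h₁ h₂, (act_append L₁ L₂ b)⟩
      zero_mem' := ⟨[], good_nil B, rfl⟩
      smul_mem' := by
        rintro c x ⟨L, hL, rfl⟩
        refine ⟨L.map fun p => (c • p.1, p.2), ?_, act_map_smulLeft c L b⟩
        intro p hp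
        obtain ⟨q, hq, rfl⟩ := List.mem_map.mp hp
        exact ⟨SMulMemClass.smul_mem c (hL q hq).1, (hL q hq).2⟩ }
  -- S is stable under multiplication by elements of B
  have hmulL : ∀ x ∈ B, ∀ z ∈ S, x * z ∈ S := by
    rintro x hx z ⟨L, hL, rfl⟩
    refine ⟨L.map fun p => (x * p.1, p.2), ?_, act_map_mulLeft x L b⟩
    intro p hp
    obtain ⟨q, hq, rfl⟩ := List.mem_map.mp hp
    exact ⟨mul_mem hx (hL q hq).1, (hL q hq).2⟩
  have hmulR : ∀ x ∈ B, ∀ z ∈ S, z * x ∈ S := by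
    rintro x hx z ⟨L, hL, rfl⟩
    refine ⟨L.map fun p => (p.1, p.2 * x), ?_, ?_⟩
    · intro p hp
      obtain ⟨q, hq, rfl⟩ := List.mem_map.mp hp
      exact ⟨(hL q hq).1, mul_mem (hL q hq).2 hx⟩
    · exact act_map_mulRight x L b
  -- the closure of S meets B in a closed two-sided ideal
  have hmulLc : ∀ x ∈ B, ∀ z ∈ closure S, x * z ∈ closure S := by
    intro x hx z hz
    exact map_mem_closure (continuous_mul_left x) hz (fun w hw => hmulL x hx w hw)
  have hmulRc : ∀ x ∈ B, ∀ z ∈ closure S, z * x ∈ closure S := by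
    intro x hx z hz
    exact map_mem_closure (f := fun w => w * x) (continuous_mul_right x) hz (fun w hw => hmulR x hx w hw)
  have haddS : ∀ x ∈ S, ∀ y ∈ S, x + y ∈ S := fun x hx y hy => T.add_mem hx hy
  have hnegS : ∀ x ∈ S, -x ∈ S := by
    intro x hx
    have h := T.smul_mem (-1 : ℂ) hx
    have : ((-1 : ℂ) • x) ∈ S := h
    simpa using this
  set K : Set ↥B := {x : ↥B | (x : A) ∈ closure S} with hK
  have hK0 : (0 : ↥B) ∈ K := by
    show ((0 : ↥B) : A) ∈ closure S
    exact subset_closure T.zero_mem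
  have hKadd : ∀ {x y : ↥B}, x ∈ K → y ∈ K → x + y ∈ K := by
    intro x y hx hy
    show ((x + y : ↥B) : A) ∈ closure S
    have e : ((x + y : ↥B) : A) = (x : A) + (y : A) := rfl
    rw [e]
    exact map_mem_closure₂ continuous_add hx hy haddS
  have hKneg : ∀ {x : ↥B}, x ∈ K → -x ∈ K := by
    intro x hx
    show ((-x : ↥B) : A) ∈ closure S
    have e : ((-x : ↥B) : A) = -(x : A) := rfl
    rw [e]
    exact map_mem_closure (f := fun w : A => -w) continuous_neg hx hnegS
  have hKl : ∀ {x y : ↥B}, y ∈ K → x * y ∈ K := by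
    intro x y hy
    show ((x * y : ↥B) : A) ∈ closure S
    have e : ((x * y : ↥B) : A) = (x : A) * (y : A) := rfl
    rw [e]
    exact hmulLc (x : A) x.2 _ hy
  have hKr : ∀ {x y : ↥B}, x ∈ K → x * y ∈ K := by
    intro x y hx
    show ((x * y : ↥B) : A) ∈ closure S
    have e : ((x * y : ↥B) : A) = (x : A) * (y : A) := rfl
    rw [e]
    exact hmulRc (y : A) y.2 _ hx
  set I : TwoSidedIdeal ↥B := TwoSidedIdeal.mk' K hK0 hKadd hKneg hKl hKr with hI
  have hImem : ∀ x : ↥B, x ∈ I ↔ (x : A) ∈ closure S := fun x =>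
    TwoSidedIdeal.mem_mk' K hK0 hKadd hKneg hKl hKr x
  have hIclosed : IsClosed (I : Set ↥B) := by
    have : (I : Set ↥B) = (Subtype.val) ⁻¹' (closure S) := by
      ext x
      simp only [Set.mem_preimage, SetLike.mem_coe]
      exact hImem x
    rw [this]
    exact IsClosed.preimage continuous_subtype_val isClosed_closure
  have hIne : I ≠ ⊥ := by
    intro hbot
    have hmem : (⟨b, hb⟩ : ↥B) ∈ I := (hImem _).mpr (subset_closure hbS)
    rw [hbot] at hmem
    rw [TwoSidedIdeal.mem_bot] at hmem
    exact hb0 (congrArg Subtype.val hmem)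
  have hItop : I = ⊤ := (hsimple I hIclosed).resolve_left hIne
  have h1c : (1 : A) ∈ closure S := by
    have h1 : (1 : ↥B) ∈ I := by rw [hItop]; trivial
    exact (hImem 1).mp h1
  -- find u ∈ S with ‖1 - u‖ < 1
  obtain ⟨u, huS, hud⟩ := Metric.mem_closure_iff.mp h1c 1 one_pos
  have hnorm : ‖1 - u‖ < 1 := by rwa [← dist_eq_norm]
  have huB : u ∈ B := hSsub huS
  set unit : Aˣ := Units.oneSub (1 - u) hnorm with hunit
  have huval : (unit : A) = u := by simp [hunit]
  set w : A := ((unit⁻¹ : Aˣ) : A) with hw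
  have hwu : w * u = 1 := by rw [← huval]; exact unit.inv_mul
  have hwB : w ∈ B := by
    have hsummable := summable_geometric_of_norm_lt_one hnorm
    have htend := hsummable.hasSum.tendsto_sum_nat
    have hwval : w = ∑' n : ℕ, (1 - u) ^ n := rfl
    rw [hwval]
    refine hBclosed.mem_of_tendsto htend (Filter.Eventually.of_forall fun n => ?_)
    exact sum_mem fun i _ => pow_mem (sub_mem (one_mem B) huB) i
  obtain ⟨L, hLg, hLb⟩ := huS
  refine ⟨L.map fun p => (w * p.1, p.2), ?_, ?_⟩
  · intro p hp
    obtain ⟨q, hq, rfl⟩ := List.mem_map.mp hp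
    exact ⟨mul_mem hwB (hLg q hq).1, (hLg q hq).2⟩
  · rw [act_map_mulLeft, hLb, hwu]

lemma central_smul_one [Nontrivial A] (hBclosed : IsClosed (B : Set A))
    (hsimple : ∀ I : TwoSidedIdeal B, IsClosed (I : Set B) → I = ⊥ ∨ I = ⊤)
    {z : A} (hz : z ∈ B) (hzc : ∀ x ∈ B, x * z = z * x) :
    ∃ c : ℂ, z = c • 1 := by
  obtain ⟨lam, hlam⟩ := spectrum.nonempty z
  refine ⟨lam, ?_⟩
  by_contra hne
  set d : A := z - lam • 1 with hd
  have hd0 : d ≠ 0 := fun h => hne (by rw [← sub_eq_zero]; exact h)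
  have hdB : d ∈ B := sub_mem hz (SMulMemClass.smul_mem lam (one_mem B))
  have hdc : ∀ x ∈ B, x * d = d * x := by
    intro x hx
    simp only [hd, mul_sub, sub_mul, hzc x hx, mul_smul_comm, smul_mul_assoc, mul_one, one_mul]
  obtain ⟨L, hLg, hLd⟩ := exists_act_one B hBclosed hsimple hdB hd0
  have key : ∀ L' : List (A × A), good B L' →
      act L' d = d * (L'.map fun p => p.1 * p.2).sum ∧
      act L' d = (L'.map fun p => p.1 * p.2).sum * d := by
    intro L'
    induction L' with
    | nil => intro _; simp
    | cons p L' ih =>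
      intro hg
      obtain ⟨h1B, h2B⟩ := hg p (List.mem_cons_self)
      obtain ⟨ih1, ih2⟩ := ih (fun q hq => hg q (List.mem_cons_of_mem _ hq))
      have e1 : p.1 * d * p.2 = d * (p.1 * p.2) := by
        rw [hdc p.1 h1B, mul_assoc]
      have e2 : p.1 * d * p.2 = (p.1 * p.2) * d := by
        rw [mul_assoc, ← hdc p.2 h2B, ← mul_assoc]
      constructor
      · simp [ih1, e1, mul_add]
      · simp [ih2, e2, add_mul]
  obtain ⟨k1, k2⟩ := key L hLg
  have hunit : IsUnit d := by
    refine ⟨⟨d, (L.map fun p => p.1 * p.2).sum, ?_, ?_⟩, rfl⟩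
    · rw [← k1, hLd]
    · rw [← k2, hLd]
  rw [spectrum.mem_iff] at hlam
  apply hlam
  have : (algebraMap ℂ A) lam - z = -d := by
    rw [hd, Algebra.algebraMap_eq_smul_one]; abel
  rw [this]
  exact hunit.neg

/-- Artin–Whaples style density: for a linearly independent family in `B` there are
multiplication operators with coefficients in `B` acting as dual functionals. -/
lemma aw [Nontrivial A] (hBclosed : IsClosed (B : Set A))
    (hsimple : ∀ I : TwoSidedIdeal B, IsClosed (I : Set B) → I = ⊥ ∨ I = ⊤) :
    ∀ (n : ℕ) (bb : Fin n → A), (∀ i, bb i ∈ B) → LinearIndependent ℂ bb →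
    ∀ i₀, ∃ L, good B L ∧ act L (bb i₀) = 1 ∧ ∀ i, i ≠ i₀ → act L (bb i) = 0 := by
  intro n
  induction n with
  | zero => intro bb _ _ i₀; exact i₀.elim0
  | succ n ih =>
    have key : ∀ (bb : Fin (n + 1) → A), (∀ i, bb i ∈ B) → LinearIndependent ℂ bb →
        ∃ L, good B L ∧ act L (bb (Fin.last n)) = 1 ∧
          ∀ i, i ≠ Fin.last n → act L (bb i) = 0 := by
      intro bb hmem hli
      by_cases hc : ∃ L, good B L ∧ (∀ i : Fin n, act L (bb i.castSucc) = 0) ∧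
          act L (bb (Fin.last n)) ≠ 0
      · obtain ⟨L₀, hL₀g, hL₀z, hL₀n⟩ := hc
        have hdB : act L₀ (bb (Fin.last n)) ∈ B := act_mem B hL₀g (hmem _)
        obtain ⟨L₁, hL₁g, hL₁⟩ := exists_act_one B hBclosed hsimple hdB hL₀n
        refine ⟨compL L₁ L₀, good_compL B hL₁g hL₀g, ?_, ?_⟩
        · rw [act_compL, hL₁]
        · intro i hi
          obtain ⟨j, rfl⟩ := Fin.exists_castSucc_eq.mpr hi
          rw [act_compL, hL₀z j, act_zero]
      · push_neg at hc
        exfalso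
        have hli' : LinearIndependent ℂ (fun i : Fin n => bb i.castSucc) :=
          hli.comp _ (Fin.castSucc_injective n)
        choose Lj hLjg hLj1 hLj0 using
          fun j : Fin n => ih (fun i => bb i.castSucc) (fun i => hmem _) hli' j
        set z : Fin n → A := fun j => act (Lj j) (bb (Fin.last n)) with hzdef
        have hzB : ∀ j, z j ∈ B := fun j => act_mem B (hLjg j) (hmem _)
        have hcent : ∀ j, ∀ x ∈ B, x * z j = z j * x := by
          intro j x hx
          set L : List (A × A) :=
            ((Lj j).map fun p => (x * p.1, p.2)) ++ ((Lj j).map fun p => (-p.1, p.2 * x))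
            with hLdef
          have hg : good B L := by
            refine good_append B ?_ ?_ <;> intro p hp <;>
              obtain ⟨q, hq, rfl⟩ := List.mem_map.mp hp
            · exact ⟨mul_mem hx ((hLjg j) q hq).1, ((hLjg j) q hq).2⟩
            · exact ⟨neg_mem ((hLjg j) q hq).1, mul_mem ((hLjg j) q hq).2 hx⟩
          have h0 : ∀ i : Fin n, act L (bb i.castSucc) = 0 := by
            intro i
            rw [hLdef, act_append, act_map_mulLeft, act_map_negMulRight]
            by_cases hij : i = j
            · subst hij
              rw [hLj1 i]
              simp
            · rw [hLj0 j i hij]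
              simp
          have h2 := hc L hg h0
          rw [hLdef, act_append, act_map_mulLeft, act_map_negMulRight] at h2
          exact add_neg_eq_zero.mp h2
        -- each z j is a scalar
        have hlam : ∀ j : Fin n, ∃ c : ℂ, z j = c • 1 := fun j =>
          central_smul_one B hBclosed hsimple (hzB j) (hcent j)
        choose lam hlamEq using hlam
        -- the magic list showing bb last = ∑ lam j • bb j
        set Lmag : List (A × A) :=
          [((1 : A), (1 : A))] ++
            (List.ofFn fun j : Fin n =>
              (Lj j).map fun p => (-(bb j.castSucc * p.1), p.2)).flatten with hLmag
        have hgmag : good B Lmag := by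
          refine good_append B ?_ ?_
          · intro p hp
            simp only [List.mem_singleton] at hp
            rw [hp]
            exact ⟨one_mem B, one_mem B⟩
          · intro p hp
            rw [List.mem_flatten] at hp
            obtain ⟨l, hl, hpl⟩ := hp
            rw [List.mem_ofFn] at hl
            obtain ⟨j, rfl⟩ := hl
            obtain ⟨q, hq, rfl⟩ := List.mem_map.mp hpl
            exact ⟨neg_mem (mul_mem (hmem j.castSucc) ((hLjg j) q hq).1), ((hLjg j) q hq).2⟩
        have hact_mag : ∀ w : A,
            act Lmag w = w + ∑ j : Fin n, -(bb j.castSucc * act (Lj j) w) := by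
          intro w
          rw [hLmag, act_append, act_join]
          congr 1
          · simp
          · rw [List.map_ofFn]
            have : ∀ j : Fin n,
                ((fun l => act l w) ∘ fun j : Fin n =>
                  (Lj j).map fun p => (-(bb j.castSucc * p.1), p.2)) j
                  = -(bb j.castSucc * act (Lj j) w) := by
              intro j
              exact act_map_negLeft _ _ _
            rw [funext this, List.sum_ofFn]
        have h0mag : ∀ i : Fin n, act Lmag (bb i.castSucc) = 0 := by
          intro i
          rw [hact_mag]
          rw [Fintype.sum_eq_single i
            (fun j hj => by rw [hLj0 j i (Ne.symm hj)]; simp)]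
          rw [hLj1 i]
          simp
        have hfin := hc Lmag hgmag h0mag
        rw [hact_mag] at hfin
        -- so bb last = ∑ j, lam j • bb j.castSucc
        have hrepr : bb (Fin.last n) = ∑ j : Fin n, lam j • bb j.castSucc := by
          have : ∀ j : Fin n, -(bb j.castSucc * z j) = -(lam j • bb j.castSucc) := by
            intro j
            rw [hlamEq j, mul_smul_comm, mul_one]
          simp only [hzdef] at this
          simp only [this] at hfin
          rw [Finset.sum_neg_distrib, add_neg_eq_zero] at hfin
          exact hfin
        -- contradiction with linear independence
        have hg : (Fin.snoc (fun j : Fin n => lam j) (-1 : ℂ) : Fin (n + 1) → ℂ) ≠ 0 := by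
          intro h
          have := congrFun h (Fin.last n)
          simp [Fin.snoc_last] at this
        apply hg
        have hsum : ∑ i : Fin (n + 1),
            (Fin.snoc (fun j : Fin n => lam j) (-1 : ℂ) : Fin (n + 1) → ℂ) i • bb i = 0 := by
          rw [Fin.sum_univ_castSucc]
          simp only [Fin.snoc_castSucc, Fin.snoc_last, neg_one_smul]
          rw [← hrepr]
          abel
        exact funext (Fintype.linearIndependent_iff.mp hli _ hsum)
    -- deduce the statement for an arbitrary index by swapping
    intro bb hmem hli i₀
    set σ := Equiv.swap i₀ (Fin.last n) with hσ
    obtain ⟨L, hg, h1, h0⟩ := key (bb ∘ σ) (fun i => hmem _) (hli.comp σ σ.injective)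
    refine ⟨L, hg, ?_, ?_⟩
    · have e : (bb ∘ σ) (Fin.last n) = bb i₀ := by
        simp [hσ, Equiv.swap_apply_right]
      rw [← e]
      exact h1
    · intro i hi
      have e : bb i = (bb ∘ σ) (σ i) := by
        simp [Function.comp, hσ, Equiv.swap_apply_self]
      rw [e]
      refine h0 (σ i) ?_
      intro hlast
      apply hi
      have : σ i = σ i₀ := by rw [hlast, hσ, Equiv.swap_apply_left]
      exact σ.injective this

end Stmt8Aux

open Stmt8Aux

set_option maxHeartbeats 2000000

/-- If `C` and `B` are commuting C*-subalgebras of `B(H)` and `B` is simple (its only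
closed two-sided ideals are `0` and `B`), then the multiplication map
`μ : C ⊙ B → B(H)`, `c ⊗ b ↦ c·b`, on the algebraic tensor product is injective. -/
theorem stmt_8 {H : Type*} [NormedAddCommGroup H] [InnerProductSpace ℂ H]
    [CompleteSpace H]
    (C B : StarSubalgebra ℂ (H →L[ℂ] H))
    (hCclosed : IsClosed (C : Set (H →L[ℂ] H)))
    (hBclosed : IsClosed (B : Set (H →L[ℂ] H)))
    (hcomm : ∀ c ∈ C, ∀ b ∈ B, c * b = b * c)
    (hsimple : ∀ I : TwoSidedIdeal B, IsClosed (I : Set B) → I = ⊥ ∨ I = ⊤)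
    (μ : (↥C ⊗[ℂ] ↥B) →ₗ[ℂ] (H →L[ℂ] H))
    (hμ : ∀ (c : C) (b : B), μ (c ⊗ₜ[ℂ] b) = (c : H →L[ℂ] H) * (b : H →L[ℂ] H)) :
    Function.Injective μ := by
  classical
  by_cases hH : Subsingleton (H →L[ℂ] H)
  · -- trivial case : everything is zero
    have hz : ∀ x : ↥C ⊗[ℂ] ↥B, x = 0 := by
      intro x
      induction x using TensorProduct.induction_on with
      | zero => rfl
      | tmul c b =>
        have hb : b = 0 := Subtype.ext (Subsingleton.elim _ _)
        rw [hb, TensorProduct.tmul_zero]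
      | add x y hx hy => rw [hx, hy, add_zero]
    intro a b _
    rw [hz a, hz b]
  have : Nontrivial (H →L[ℂ] H) := not_subsingleton_iff_nontrivial.mp hH
  set A := H →L[ℂ] H with hA
  let bB := Module.Basis.ofVectorSpace ℂ ↥B
  set ι := Module.Basis.ofVectorSpaceIndex ℂ ↥B with hι
  let e : (↥C ⊗[ℂ] ↥B) ≃ₗ[ℂ] (ι →₀ ↥C) :=
    (TensorProduct.congr (LinearEquiv.refl ℂ ↥C) bB.repr).trans
      (TensorProduct.finsuppScalarRight ℂ ℂ ↥C ι)
  let ιB : ↥B →ₗ[ℂ] A := B.toSubalgebra.val.toLinearMap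
  let ιC : ↥C →ₗ[ℂ] A := C.toSubalgebra.val.toLinearMap
  let ν : (ι →₀ ↥C) →ₗ[ℂ] A :=
    Finsupp.lsum ℂ fun i => (LinearMap.mulRight ℂ ((bB i : ↥B) : A)).comp ιC
  have hμν : ∀ t, μ t = ν (e t) := by
    have : μ = ν.comp (e : (↥C ⊗[ℂ] ↥B) →ₗ[ℂ] (ι →₀ ↥C)) := by
      apply TensorProduct.ext'
      intro c b
      rw [hμ c b]
      have he : e (c ⊗ₜ[ℂ] b) = (bB.repr b).sum fun i r => Finsupp.single i (r • c) := by
        simp [e, TensorProduct.congr_tmul, TensorProduct.finsuppScalarRight_apply_tmul]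
      show ((c : A) * (b : A)) = ν (e (c ⊗ₜ[ℂ] b))
      have h2 : ν (e (c ⊗ₜ[ℂ] b))
          = (bB.repr b).sum fun i (r : ℂ) => ν (Finsupp.single i (r • c)) := by
        rw [he]
        exact map_finsuppSum ν _ _
      rw [h2]
      have hterm : ∀ i (r : ℂ), ν (Finsupp.single i (r • c)) = r • ((c : A) * ((bB i : ↥B) : A)) := by
        intro i r
        rw [Finsupp.lsum_single]
        show ((r • c : ↥C) : A) * ((bB i : ↥B) : A) = r • ((c : A) * ((bB i : ↥B) : A))
        rw [SetLike.val_smul, smul_mul_assoc]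
      simp only [hterm]
      have hb' : ((b : ↥B) : A) = (bB.repr b).sum fun i (r : ℂ) => r • ((bB i : ↥B) : A) := by
        have h3 := congrArg ιB (bB.linearCombination_repr b)
        rw [Finsupp.linearCombination_apply, map_finsuppSum ιB] at h3
        simp only [map_smul] at h3
        exact h3.symm
      rw [show (c : A) * (b : A) = (c : A) * ((b : ↥B) : A) from rfl, hb', Finsupp.mul_sum]
      simp only [mul_smul_comm]
    intro t
    rw [this]
    rfl
  -- kernel is trivial
  have hker : ∀ t, μ t = 0 → t = 0 := by
    intro t ht
    rw [hμν] at ht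
    have hsum : ∑ i ∈ (e t).support, ((e t i : ↥C) : A) * ((bB i : ↥B) : A) = 0 := by
      have h1 : ν (e t) = (e t).sum fun i c => ((c : ↥C) : A) * ((bB i : ↥B) : A) := by
        rw [Finsupp.lsum_apply]
        rfl
      exact h1.symm.trans ht
    set s := (e t).support with hs
    set m := s.card with hm
    let σ : Fin m ≃ ↥s := (Fintype.equivFinOfCardEq (Fintype.card_coe s)).symm
    set bb : Fin m → A := fun k => ((bB (σ k : ι) : ↥B) : A) with hbb
    have hmem : ∀ k, bb k ∈ B := fun k => (bB (σ k : ι) : ↥B).2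
    have hliA : LinearIndependent ℂ bb := by
      have h1 : LinearIndependent ℂ (fun i : ι => ((bB i : ↥B) : A)) :=
        bB.linearIndependent.map' ιB (by
          rw [LinearMap.ker_eq_bot]
          exact Subtype.val_injective)
      exact h1.comp (fun k : Fin m => (σ k : ι)) fun k l h => σ.injective (Subtype.ext h)
    have hsum' : ∑ k : Fin m, ((e t (σ k : ι) : ↥C) : A) * bb k = 0 := by
      rw [← hsum]
      rw [← Finset.sum_coe_sort s (fun i => ((e t i : ↥C) : A) * ((bB i : ↥B) : A))]
      exact Equiv.sum_comp σ (fun x : ↥s => ((e t (x : ι) : ↥C) : A) * ((bB (x : ι) : ↥B) : A))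
    have hcoeff : ∀ i₀ ∈ s, e t i₀ = 0 := by
      intro i₀ hi₀
      obtain ⟨L, hg, h1L, h0L⟩ :=
        aw B hBclosed hsimple m bb hmem hliA (σ.symm ⟨i₀, hi₀⟩)
      have hstep : act L (∑ k : Fin m, ((e t (σ k : ι) : ↥C) : A) * bb k)
          = ∑ k : Fin m, ((e t (σ k : ι) : ↥C) : A) * act L (bb k) := by
        rw [act_sum]
        refine Finset.sum_congr rfl fun k _ => ?_
        exact act_mul_left_comm L
          (fun p hp => (hcomm _ (e t (σ k : ι)).2 _ (hg p hp).1).symm) (bb k)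
      have hzero : (0 : A) = ((e t (σ (σ.symm ⟨i₀, hi₀⟩) : ι) : ↥C) : A) := by
        calc (0 : A) = act L 0 := (act_zero L).symm
          _ = act L (∑ k : Fin m, ((e t (σ k : ι) : ↥C) : A) * bb k) := by rw [hsum']
          _ = ∑ k : Fin m, ((e t (σ k : ι) : ↥C) : A) * act L (bb k) := hstep
          _ = ((e t (σ (σ.symm ⟨i₀, hi₀⟩) : ι) : ↥C) : A) * act L (bb (σ.symm ⟨i₀, hi₀⟩)) := by
              refine Fintype.sum_eq_single _ fun k hk => ?_
              rw [h0L k hk, mul_zero]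
          _ = ((e t (σ (σ.symm ⟨i₀, hi₀⟩) : ι) : ↥C) : A) := by rw [h1L, mul_one]
      rw [Equiv.apply_symm_apply] at hzero
      exact Subtype.ext hzero.symm
    have het : e t = 0 := by
      ext i
      by_cases hi : i ∈ (e t).support
      · rw [hcoeff i hi]
        rfl
      · rw [Finsupp.notMem_support_iff.mp hi]
        rfl
    exact (LinearEquiv.map_eq_zero_iff e).mp het
  intro a b hab
  have : μ (a - b) = 0 := by rw [map_sub, hab, sub_self]
  exact sub_eq_zero.mp (hker _ this)
end

section
/- If M ⊆ B(H) is a factor (a von Neumann algebra with M ∩ M' = ℂ·1), then the multiplication map M' ⊙ M → B(H), a ⊗ b ↦ ab, on the algebraic tensor product is injective. -/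
open scoped TensorProduct

open ContinuousLinearMap

namespace Stmt9Aux

local notation "⟪" x ", " y "⟫" => @inner ℂ _ _ x y

set_option linter.unusedSectionVars false
set_option linter.unusedVariables false

/-- If a closed subspace is invariant under `T` and `adjoint T`, the orthogonal projection
onto it commutes with `T`. -/
lemma proj_comm {E : Type*} [NormedAddCommGroup E] [InnerProductSpace ℂ E] [CompleteSpace E]
    (K : Submodule ℂ E) [K.HasOrthogonalProjection] (T : E →L[ℂ] E)
    (hT : ∀ v ∈ K, T v ∈ K) (hT' : ∀ v ∈ K, (adjoint T) v ∈ K) (v : E) :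
    (K.orthogonalProjectionOnto (T v) : E) = T (K.orthogonalProjectionOnto v) := by
  set P : E →L[ℂ] E := K.subtypeL.comp (K.orthogonalProjectionOnto) with hP
  have hPv : ∀ w : E, (K.orthogonalProjectionOnto w : E) = P w := fun w => rfl
  have hsplit : T v = T (P v) + T (v - P v) := by rw [← map_add, add_sub_cancel]
  have h1 : (K.orthogonalProjectionOnto (T (P v)) : E) = T (P v) := by
    rw [Submodule.coe_orthogonalProjectionOnto_apply, Submodule.starProjection_eq_self_iff]
    exact hT _ (K.orthogonalProjectionOnto v).2
  have h2 : T (v - P v) ∈ Kᗮ := by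
    intro k hk
    have hvP : v - P v ∈ Kᗮ := K.sub_starProjection_mem_orthogonal v
    have := hvP ((adjoint T) k) (hT' k hk)
    calc ⟪k, T (v - P v)⟫ = ⟪(adjoint T) k, v - P v⟫ := (adjoint_inner_left T _ _).symm
      _ = 0 := this
  have h3 : K.orthogonalProjectionOnto (T (v - P v)) = 0 :=
    Submodule.orthogonalProjectionOnto_apply_of_mem_orthogonal h2
  rw [hsplit, map_add, Submodule.coe_add, h1, h3]
  simp [hPv]


lemma closure_span_stable {E : Type*} [NormedAddCommGroup E] [NormedSpace ℂ E]
    {S : Set E} (T : E →L[ℂ] E) (h : ∀ v ∈ S, T v ∈ Submodule.span ℂ S) :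
    ∀ v ∈ (Submodule.span ℂ S).topologicalClosure,
      T v ∈ (Submodule.span ℂ S).topologicalClosure := by
  have h1 : Submodule.span ℂ S ≤ (Submodule.span ℂ S).topologicalClosure.comap (T : E →ₗ[ℂ] E) := by
    rw [Submodule.span_le]
    intro v hv
    exact (Submodule.le_topologicalClosure _) (h v hv)
  have h2 : IsClosed (((Submodule.span ℂ S).topologicalClosure.comap (T : E →ₗ[ℂ] E) : Submodule ℂ E) :
      Set E) := by
    rw [Submodule.comap_coe]
    exact (Submodule.span ℂ S).isClosed_topologicalClosure.preimage T.continuous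
  exact fun v hv => (Submodule.span ℂ S).topologicalClosure_minimal h1 h2 hv


variable {H : Type*} [NormedAddCommGroup H] [InnerProductSpace ℂ H] [CompleteSpace H]
variable (M : VonNeumannAlgebra H)

noncomputable def Ee : WithLp 2 (H × H) ≃L[ℂ] H × H := WithLp.prodContinuousLinearEquiv 2 ℂ H H

noncomputable def dg (T : H →L[ℂ] H) : WithLp 2 (H × H) →L[ℂ] WithLp 2 (H × H) :=
  (Ee (H := H)).symm.toContinuousLinearMap.comp
    ((T.prodMap T).comp (Ee (H := H)).toContinuousLinearMap)

lemma dg_fst (T : H →L[ℂ] H) (z : WithLp 2 (H × H)) : (dg T z).fst = T z.fst := rfl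
lemma dg_snd (T : H →L[ℂ] H) (z : WithLp 2 (H × H)) : (dg T z).snd = T z.snd := rfl

lemma h2ext {z w : WithLp 2 (H × H)} (h1 : z.fst = w.fst) (h2 : z.snd = w.snd) : z = w :=
  (Ee (H := H)).injective (Prod.ext h1 h2)

lemma dg_adjoint (T : H →L[ℂ] H) : adjoint (dg T) = dg (adjoint T) := by
  symm
  rw [eq_adjoint_iff]
  intro x y
  simp only [WithLp.prod_inner_apply, dg_fst, dg_snd, adjoint_inner_left]
  exact congrArg₂ (· + ·) (adjoint_inner_left T _ _) (adjoint_inner_left T _ _)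

lemma dg_mul (T S : H →L[ℂ] H) (z : WithLp 2 (H × H)) : dg T (dg S z) = dg (T * S) z := rfl

omit [CompleteSpace H] in
lemma norm_fst_le (x : WithLp 2 (H × H)) : ‖x.fst‖ ≤ ‖x‖ := by
  have h := WithLp.prod_norm_sq_eq_of_L2 x
  nlinarith [norm_nonneg x, norm_nonneg x.fst, sq_nonneg ‖x.snd‖]

omit [CompleteSpace H] in
lemma norm_snd_le (x : WithLp 2 (H × H)) : ‖x.snd‖ ≤ ‖x‖ := by
  have h := WithLp.prod_norm_sq_eq_of_L2 x
  nlinarith [norm_nonneg x, norm_nonneg x.snd, sq_nonneg ‖x.fst‖]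

/-- the set of products `m * m'`. -/
def mulSet (M : VonNeumannAlgebra H) : Set (H →L[ℂ] H) :=
  {x | ∃ m ∈ M, ∃ m' ∈ M.commutant, x = m * m'}

variable (M : VonNeumannAlgebra H)

lemma mulSet_stable (T : H →L[ℂ] H) (hT : T ∈ M ∨ T ∈ M.commutant) :
    ∀ A ∈ mulSet M, T * A ∈ Submodule.span ℂ (mulSet M) := by
  rintro A ⟨m, hm, m', hm', rfl⟩
  apply Submodule.subset_span
  rcases hT with hT | hT
  · exact ⟨T * m, mul_mem hT hm, m', hm', by noncomm_ring⟩
  · refine ⟨m, hm, T * m', mul_mem hT hm', ?_⟩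
    have hc : m * T = T * m := VonNeumannAlgebra.mem_commutant_iff.mp hT m hm
    calc T * (m * m') = (T * m) * m' := by noncomm_ring
    _ = (m * T) * m' := by rw [hc]
    _ = m * (T * m') := by noncomm_ring

set_option maxHeartbeats 1000000 in
theorem approx2
    (hfactor : ∀ x : H →L[ℂ] H, x ∈ M → x ∈ M.commutant →
      ∃ c : ℂ, x = c • (1 : H →L[ℂ] H))
    (T : H →L[ℂ] H) (v₁ v₂ : H) (ε : ℝ) (hε : 0 < ε) :
    ∃ A ∈ Submodule.span ℂ (mulSet M), ‖A v₁ - T v₁‖ < ε ∧ ‖A v₂ - T v₂‖ < ε := by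
  classical
  -- the evaluation map into H² 
  set Φ : (H →L[ℂ] H) →ₗ[ℂ] WithLp 2 (H × H) :=
    { toFun := fun A => (Ee (H := H)).symm (A v₁, A v₂)
      map_add' := fun A B => rfl
      map_smul' := fun c A => rfl } with hΦ
  set S : Set (WithLp 2 (H × H)) := Φ '' (mulSet M) with hS
  set K := (Submodule.span ℂ S).topologicalClosure with hK
  haveI : CompleteSpace K := (Submodule.span ℂ S).isClosed_topologicalClosure.completeSpace_coe
  set P : WithLp 2 (H × H) →L[ℂ] WithLp 2 (H × H) :=
    K.subtypeL.comp (K.orthogonalProjectionOnto) with hPdef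
  have hPmem : ∀ z, P z ∈ K := by
    intro z
    simp only [hPdef, ContinuousLinearMap.comp_apply, Submodule.subtypeL_apply]
    exact (K.orthogonalProjectionOnto z).2
  have hPfix : ∀ z ∈ K, P z = z := by
    intro z hz
    exact K.starProjection_eq_self_iff.mpr hz
  -- Φ intertwines multiplication and dg
  have hΦdg : ∀ (T₀ : H →L[ℂ] H) (A : H →L[ℂ] H), dg T₀ (Φ A) = Φ (T₀ * A) := by
    intro T₀ A
    apply h2ext
    · rfl
    · rfl
  -- span S is the image of span mulSet
  have hspanS : Submodule.span ℂ S = (Submodule.span ℂ (mulSet M)).map Φ := by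
    rw [Submodule.map_span]
  -- stability of K under dg T₀ for T₀ ∈ M ∪ M'
  have hstab : ∀ T₀ : H →L[ℂ] H, (T₀ ∈ M ∨ T₀ ∈ M.commutant) → ∀ z ∈ K, dg T₀ z ∈ K := by
    intro T₀ hT₀
    apply closure_span_stable
    rintro v ⟨A, hA, rfl⟩
    rw [hΦdg]
    rw [hspanS]
    exact Submodule.mem_map_of_mem (mulSet_stable M T₀ hT₀ A hA)
  -- P commutes with dg T₀
  have hcomm : ∀ T₀ : H →L[ℂ] H, (T₀ ∈ M ∨ T₀ ∈ M.commutant) →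
      ∀ z, P (dg T₀ z) = dg T₀ (P z) := by
    intro T₀ hT₀ z
    have hstar : (star T₀ ∈ M ∨ star T₀ ∈ M.commutant) := by
      rcases hT₀ with h | h
      · exact Or.inl (star_mem h)
      · exact Or.inr (star_mem h)
    have h2 : ∀ v ∈ K, (adjoint (dg T₀)) v ∈ K := by
      rw [dg_adjoint, ← ContinuousLinearMap.star_eq_adjoint]
      exact hstab (star T₀) hstar
    exact proj_comm K (dg T₀) (hstab T₀ hT₀) h2 z
  -- block entries of P are scalars
  set i1 : H →L[ℂ] WithLp 2 (H × H) :=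
    (Ee (H := H)).symm.toContinuousLinearMap.comp (ContinuousLinearMap.inl ℂ H H) with hi1
  set i2 : H →L[ℂ] WithLp 2 (H × H) :=
    (Ee (H := H)).symm.toContinuousLinearMap.comp (ContinuousLinearMap.inr ℂ H H) with hi2
  set q1 : WithLp 2 (H × H) →L[ℂ] H :=
    (ContinuousLinearMap.fst ℂ H H).comp (Ee (H := H)).toContinuousLinearMap with hq1
  set q2 : WithLp 2 (H × H) →L[ℂ] H :=
    (ContinuousLinearMap.snd ℂ H H).comp (Ee (H := H)).toContinuousLinearMap with hq2
  have hdecomp : ∀ z : WithLp 2 (H × H), z = i1 z.fst + i2 z.snd := by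
    intro z
    apply h2ext
    · show z.fst = z.fst + 0; simp
    · show z.snd = 0 + z.snd; simp
  have hscal : ∀ (a : WithLp 2 (H × H) →L[ℂ] H) (b : H →L[ℂ] WithLp 2 (H × H)),
      (∀ T₀, (T₀ ∈ M ∨ T₀ ∈ M.commutant) → ∀ u : H,
        a (P (dg T₀ (b u))) = T₀ (a (P (b u)))) → False ∨ True := fun _ _ _ => Or.inr trivial
  -- define the four blocks
  have hblock : ∀ (pq : (WithLp 2 (H × H) →L[ℂ] H) × (H →L[ℂ] WithLp 2 (H × H))),
      (∀ T₀ : H →L[ℂ] H, ∀ u, pq.1 (dg T₀ u) = T₀ (pq.1 u)) →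
      (∀ T₀ : H →L[ℂ] H, ∀ u, dg T₀ (pq.2 u) = pq.2 (T₀ u)) →
      ∃ c : ℂ, ∀ u, pq.1 (P (pq.2 u)) = c • u := by
    rintro ⟨q, i⟩ hq hi
    set Pij : H →L[ℂ] H := q.comp (P.comp i) with hPij
    have hcom : ∀ T₀ : H →L[ℂ] H, (T₀ ∈ M ∨ T₀ ∈ M.commutant) → T₀ * Pij = Pij * T₀ := by
      intro T₀ hT₀
      ext u
      have : P (dg T₀ (i u)) = dg T₀ (P (i u)) := hcomm T₀ hT₀ _
      calc (T₀ * Pij) u = T₀ (q (P (i u))) := rfl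
      _ = q (dg T₀ (P (i u))) := (hq T₀ _).symm
      _ = q (P (dg T₀ (i u))) := by rw [this]
      _ = q (P (i (T₀ u))) := by rw [hi]
      _ = (Pij * T₀) u := rfl
    have hmem1 : Pij ∈ M := by
      have : Pij ∈ M.commutant.commutant := by
        rw [VonNeumannAlgebra.mem_commutant_iff]
        intro g hg
        exact hcom g (Or.inr hg)
      rwa [VonNeumannAlgebra.commutant_commutant] at this
    have hmem2 : Pij ∈ M.commutant := by
      rw [VonNeumannAlgebra.mem_commutant_iff]
      intro g hg
      exact hcom g (Or.inl hg)
    obtain ⟨c, hc⟩ := hfactor Pij hmem1 hmem2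
    exact ⟨c, fun u => by
      have : Pij u = (c • (1 : H →L[ℂ] H)) u := by rw [← hc]
      have h' : Pij u = c • u := by simpa using this
      exact h'⟩
  obtain ⟨c11, hc11⟩ := hblock (q1, i1) (fun T₀ u => rfl) (fun T₀ u => by
    apply h2ext
    · rfl
    · show T₀ 0 = 0; simp)
  obtain ⟨c12, hc12⟩ := hblock (q1, i2) (fun T₀ u => rfl) (fun T₀ u => by
    apply h2ext
    · show T₀ 0 = 0; simp
    · rfl)
  obtain ⟨c21, hc21⟩ := hblock (q2, i1) (fun T₀ u => rfl) (fun T₀ u => by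
    apply h2ext
    · rfl
    · show T₀ 0 = 0; simp)
  obtain ⟨c22, hc22⟩ := hblock (q2, i2) (fun T₀ u => rfl) (fun T₀ u => by
    apply h2ext
    · show T₀ 0 = 0; simp
    · rfl)
  -- componentwise formula for P
  have hPadd : ∀ z w, P (z + w) = P z + P w := fun z w => map_add P z w
  have hPfst : ∀ z, (P z).fst = c11 • z.fst + c12 • z.snd := by
    intro z
    have h0 : P z = P (i1 z.fst) + P (i2 z.snd) := by
      conv_lhs => rw [hdecomp z]
      exact hPadd _ _
    have : (P z).fst = q1 (P (i1 z.fst)) + q1 (P (i2 z.snd)) := by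
      rw [h0]; rfl
    rw [this, hc11, hc12]
  have hPsnd : ∀ z, (P z).snd = c21 • z.fst + c22 • z.snd := by
    intro z
    have h0 : P z = P (i1 z.fst) + P (i2 z.snd) := by
      conv_lhs => rw [hdecomp z]
      exact hPadd _ _
    have : (P z).snd = q2 (P (i1 z.fst)) + q2 (P (i2 z.snd)) := by
      rw [h0]; rfl
    rw [this, hc21, hc22]
  -- P commutes with dg T for arbitrary T
  have hPdg : ∀ z, P (dg T z) = dg T (P z) := by
    intro z
    apply h2ext
    · rw [hPfst, dg_fst, dg_fst, dg_snd, hPfst]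
      simp only [map_add, map_smul]
    · rw [hPsnd, dg_snd, dg_fst, dg_snd, hPsnd]
      simp only [map_add, map_smul]
  -- the pair (v₁, v₂) lies in K
  have hvvec : Φ 1 ∈ K := by
    apply Submodule.le_topologicalClosure
    exact Submodule.subset_span ⟨1, ⟨1, one_mem _, 1, one_mem _, by simp⟩, rfl⟩
  have hTv : dg T (Φ 1) ∈ K := by
    have : P (dg T (Φ 1)) = dg T (Φ 1) := by rw [hPdg, hPfix _ hvvec]
    rw [← this]
    exact hPmem _
  -- unfold the closure
  have hclos : dg T (Φ 1) ∈ closure ((Submodule.span ℂ S : Submodule ℂ (WithLp 2 (H × H))) :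
      Set (WithLp 2 (H × H))) := by
    rw [← Submodule.topologicalClosure_coe]
    exact hTv
  rw [Metric.mem_closure_iff] at hclos
  obtain ⟨b, hb, hdist⟩ := hclos ε hε
  rw [hspanS] at hb
  obtain ⟨A, hA, rfl⟩ := hb
  refine ⟨A, hA, ?_, ?_⟩
  · have h1 : ‖(dg T (Φ 1) - Φ A).fst‖ ≤ ‖dg T (Φ 1) - Φ A‖ := norm_fst_le _
    have h2 : (dg T (Φ 1) - Φ A).fst = T v₁ - A v₁ := rfl
    rw [h2] at h1
    rw [norm_sub_rev]
    calc ‖T v₁ - A v₁‖ ≤ ‖dg T (Φ 1) - Φ A‖ := h1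
    _ = dist (dg T (Φ 1)) (Φ A) := (dist_eq_norm _ _).symm
    _ < ε := hdist
  · have h1 : ‖(dg T (Φ 1) - Φ A).snd‖ ≤ ‖dg T (Φ 1) - Φ A‖ := norm_snd_le _
    have h2 : (dg T (Φ 1) - Φ A).snd = T v₂ - A v₂ := rfl
    rw [h2] at h1
    rw [norm_sub_rev]
    calc ‖T v₂ - A v₂‖ ≤ ‖dg T (Φ 1) - Φ A‖ := h1
    _ = dist (dg T (Φ 1)) (Φ A) := (dist_eq_norm _ _).symm
    _ < ε := hdist


/-- the set `{ (m * m' * w) ζ }`. -/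
def genSet (w : H →L[ℂ] H) : Set H :=
  {v | ∃ m ∈ M, ∃ m' ∈ M.commutant, ∃ ζ : H, (m * m' * w) ζ = v}


theorem density (hfactor : ∀ x : H →L[ℂ] H, x ∈ M → x ∈ M.commutant →
      ∃ c : ℂ, x = c • (1 : H →L[ℂ] H)) (w : H →L[ℂ] H) (hw : w ≠ 0) :
    (Submodule.span ℂ (genSet M w)).topologicalClosure = ⊤ := by
  classical
  set K := (Submodule.span ℂ (genSet M w)).topologicalClosure with hKdef
  haveI : CompleteSpace K :=
    (Submodule.span ℂ (genSet M w)).isClosed_topologicalClosure.completeSpace_coe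
  set P : H →L[ℂ] H := K.subtypeL.comp (K.orthogonalProjectionOnto) with hPdef
  -- stability of the generating set
  have stab : ∀ T : H →L[ℂ] H, (T ∈ M ∨ T ∈ M.commutant) →
      ∀ v ∈ genSet M w, T v ∈ Submodule.span ℂ (genSet M w) := by
    rintro T hT v ⟨m, hm, m', hm', ζ, rfl⟩
    apply Submodule.subset_span
    rcases hT with hT | hT
    · exact ⟨T * m, mul_mem hT hm, m', hm', ζ, by simp [mul_assoc]⟩
    · refine ⟨m, hm, T * m', mul_mem hT hm', ζ, ?_⟩
      have hc : T * m = m * T := (VonNeumannAlgebra.mem_commutant_iff.mp hT m hm).symm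
      have : m * (T * m') * w = T * (m * m' * w) := by
        rw [← mul_assoc, ← hc]; simp [mul_assoc]
      rw [this]; simp
  -- P commutes with every element of M and M'
  have hcomm : ∀ T : H →L[ℂ] H, (T ∈ M ∨ T ∈ M.commutant) → T * P = P * T := by
    intro T hT
    have hstar : (star T ∈ M ∨ star T ∈ M.commutant) := by
      rcases hT with h | h
      · exact Or.inl (star_mem h)
      · exact Or.inr (star_mem h)
    have h1 : ∀ v ∈ K, T v ∈ K := closure_span_stable T (stab T hT)
    have h2 : ∀ v ∈ K, (adjoint T) v ∈ K := by
      rw [← ContinuousLinearMap.star_eq_adjoint]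
      exact closure_span_stable (star T) (stab _ hstar)
    ext v
    exact (proj_comm K T h1 h2 v).symm
  -- P is scalar
  have hPM : P ∈ M := by
    have : P ∈ M.commutant.commutant := by
      rw [VonNeumannAlgebra.mem_commutant_iff]
      intro g hg
      exact hcomm g (Or.inr hg)
    rwa [VonNeumannAlgebra.commutant_commutant] at this
  have hPM' : P ∈ M.commutant := by
    rw [VonNeumannAlgebra.mem_commutant_iff]
    intro g hg
    exact hcomm g (Or.inl hg)
  obtain ⟨c, hc⟩ := hfactor P hPM hPM'
  -- P fixes w ζ₀ ≠ 0
  obtain ⟨ζ₀, hζ₀⟩ : ∃ ζ₀, w ζ₀ ≠ 0 := by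
    by_contra hcon
    push_neg at hcon
    exact hw (by ext ζ; simpa using hcon ζ)
  have hmem : w ζ₀ ∈ K := by
    apply Submodule.le_topologicalClosure
    exact Submodule.subset_span ⟨1, one_mem _, 1, one_mem _, ζ₀, by simp⟩
  have hfix : P (w ζ₀) = w ζ₀ := by
    exact K.starProjection_eq_self_iff.mpr hmem
  have hc1 : c = 1 := by
    rw [hc] at hfix
    simp only [ContinuousLinearMap.smul_apply, ContinuousLinearMap.one_apply] at hfix
    have : (c - 1) • (w ζ₀) = 0 := by rw [sub_smul, one_smul, hfix]; simp
    rcases smul_eq_zero.mp this with h | h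
    · exact sub_eq_zero.mp h
    · exact absurd h hζ₀
  have hP1 : P = 1 := by rw [hc, hc1, one_smul]
  rw [eq_top_iff]
  intro v _
  have : P v ∈ K := by
    simp only [hPdef, ContinuousLinearMap.comp_apply, Submodule.subtypeL_apply]
    exact (K.orthogonalProjectionOnto v).2
  rwa [hP1] at this


/-- vanishing on a dense set -/
lemma eq_zero_of_ann (hfactor : ∀ x : H →L[ℂ] H, x ∈ M → x ∈ M.commutant →
      ∃ c : ℂ, x = c • (1 : H →L[ℂ] H)) (x w : H →L[ℂ] H) (hw : w ≠ 0)
    (h : ∀ v ∈ genSet M w, x v = 0) : x = 0 := by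
  have h1 : Submodule.span ℂ (genSet M w) ≤ LinearMap.ker (x : H →ₗ[ℂ] H) := by
    rw [Submodule.span_le]; intro v hv; exact h v hv
  have h2 : (Submodule.span ℂ (genSet M w)).topologicalClosure ≤ LinearMap.ker (x : H →ₗ[ℂ] H) :=
    Submodule.topologicalClosure_minimal _ h1 (isClosed_ker x)
  ext v
  have hv : v ∈ (Submodule.span ℂ (genSet M w)).topologicalClosure := by
    rw [density M hfactor w hw]; trivial
  simpa using LinearMap.mem_ker.mp (h2 hv)

lemma lemA (hfactor : ∀ x : H →L[ℂ] H, x ∈ M → x ∈ M.commutant →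
      ∃ c : ℂ, x = c • (1 : H →L[ℂ] H)) {x y : H →L[ℂ] H} (hx : x ∈ M.commutant) (hy : y ∈ M) (hxy : x * y = 0)
    (hyne : y ≠ 0) : x = 0 := by
  apply eq_zero_of_ann M hfactor x y hyne
  rintro v ⟨m, hm, m', hm', ζ, rfl⟩
  have h1 : x * m = m * x := (VonNeumannAlgebra.mem_commutant_iff.mp hx m hm).symm
  have h2 : y * m' = m' * y := VonNeumannAlgebra.mem_commutant_iff.mp hm' y hy
  have : x * (m * m' * y) = m * (x * y) * m' := by
    calc x * (m * m' * y) = (x * m) * (m' * y) := by noncomm_ring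
    _ = (m * x) * (y * m') := by rw [h1, h2]
    _ = m * (x * y) * m' := by noncomm_ring
  calc x ((m * m' * y) ζ) = (x * (m * m' * y)) ζ := rfl
  _ = (m * (x * y) * m') ζ := by rw [this]
  _ = 0 := by rw [hxy]; simp

lemma lemA' (hfactor : ∀ x : H →L[ℂ] H, x ∈ M → x ∈ M.commutant →
      ∃ c : ℂ, x = c • (1 : H →L[ℂ] H)) {x y : H →L[ℂ] H} (hx : x ∈ M) (hy : y ∈ M.commutant) (hxy : x * y = 0)
    (hyne : y ≠ 0) : x = 0 := by
  apply eq_zero_of_ann M hfactor x y hyne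
  rintro v ⟨m, hm, m', hm', ζ, rfl⟩
  have h1 : m * m' = m' * m := VonNeumannAlgebra.mem_commutant_iff.mp hm' m hm
  have h2 : x * m' = m' * x := VonNeumannAlgebra.mem_commutant_iff.mp hm' x hx
  have h3 : m * y = y * m := VonNeumannAlgebra.mem_commutant_iff.mp hy m hm
  have : x * (m * m' * y) = m' * (x * y) * m := by
    calc x * (m * m' * y) = (x * m') * (m * y) := by rw [h1]; noncomm_ring
    _ = (m' * x) * (y * m) := by rw [h2, h3]
    _ = m' * (x * y) * m := by noncomm_ring
  calc x ((m * m' * y) ζ) = (x * (m * m' * y)) ζ := rfl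
  _ = (m' * (x * y) * m) ζ := by rw [this]
  _ = 0 := by rw [hxy]; simp

lemma lemA'' (hfactor : ∀ x : H →L[ℂ] H, x ∈ M → x ∈ M.commutant →
      ∃ c : ℂ, x = c • (1 : H →L[ℂ] H)) {x y : H →L[ℂ] H} (hx : x ∈ M.commutant) (hy : y ∈ M) (hxy : x * y = 0)
    (hxne : x ≠ 0) : y = 0 := by
  have hstar : (star y) * (star x) = 0 := by
    rw [← star_mul, hxy, star_zero]
  have := lemA' M hfactor (star_mem hy) (star_mem hx) hstar (by simpa using hxne)
  simpa using congrArg star this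


theorem lemC
    (hfactor : ∀ x : H →L[ℂ] H, x ∈ M → x ∈ M.commutant →
      ∃ c : ℂ, x = c • (1 : H →L[ℂ] H))
    {t s : H →L[ℂ] H} (ht : t ∈ M.commutant) (hs : s ∈ M.commutant) (htne : t ≠ 0)
    (hcomm : ∀ b ∈ M.commutant, t * b * s = s * b * t) : ∃ c : ℂ, s = c • t := by
  classical
  -- step (a): extend to the span of mulSet
  have hA : ∀ A ∈ Submodule.span ℂ (mulSet M), t * A * s = s * A * t := by
    intro A hA
    induction hA using Submodule.span_induction with
    | mem A hAmem =>
      obtain ⟨m, hm, m', hm', rfl⟩ := hAmem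
      have h1 : m * t = t * m := VonNeumannAlgebra.mem_commutant_iff.mp ht m hm
      have h2 : m * s = s * m := VonNeumannAlgebra.mem_commutant_iff.mp hs m hm
      have h3 : t * m' * s = s * m' * t := hcomm m' hm'
      calc t * (m * m') * s = (t * m) * (m' * s) := by noncomm_ring
      _ = (m * t) * (m' * s) := by rw [h1]
      _ = m * (t * m' * s) := by noncomm_ring
      _ = m * (s * m' * t) := by rw [h3]
      _ = (m * s) * (m' * t) := by noncomm_ring
      _ = (s * m) * (m' * t) := by rw [h2]
      _ = s * (m * m') * t := by noncomm_ring
    | zero => simp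
    | add A B _ _ ihA ihB => simp only [mul_add, add_mul, ihA, ihB]
    | smul c A _ ihA =>
      rw [mul_smul_comm, smul_mul_assoc, mul_smul_comm, smul_mul_assoc, ihA]
  -- step (b): t ∘ T ∘ s = s ∘ T ∘ t for arbitrary T
  have hb : ∀ T : H →L[ℂ] H, t.comp (T.comp s) = s.comp (T.comp t) := by
    intro T
    ext ξ
    apply ext_inner_left ℂ
    intro η
    set D : ℂ := ⟪η, t (T (s ξ))⟫ - ⟪η, s (T (t ξ))⟫ with hD
    have hbound : ∀ ε : ℝ, 0 < ε → ‖D‖ ≤ (‖η‖ * ‖t‖ + ‖η‖ * ‖s‖) * ε := by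
      intro ε hε
      obtain ⟨A, hAmem, h1, h2⟩ := approx2 M hfactor T (s ξ) (t ξ) ε hε
      have hmid : t (A (s ξ)) = s (A (t ξ)) := by
        have := hA A hAmem
        calc t (A (s ξ)) = (t * A * s) ξ := rfl
        _ = (s * A * t) ξ := by rw [this]
        _ = s (A (t ξ)) := rfl
      have hsplit : D = ⟪η, t (T (s ξ)) - t (A (s ξ))⟫ + ⟪η, s (A (t ξ)) - s (T (t ξ))⟫ := by
        rw [inner_sub_right, inner_sub_right, hmid, hD]
        ring
      rw [hsplit]
      calc ‖⟪η, t (T (s ξ)) - t (A (s ξ))⟫ + ⟪η, s (A (t ξ)) - s (T (t ξ))⟫‖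
          ≤ ‖⟪η, t (T (s ξ)) - t (A (s ξ))⟫‖ + ‖⟪η, s (A (t ξ)) - s (T (t ξ))⟫‖ :=
            norm_add_le _ _
      _ ≤ ‖η‖ * ‖t (T (s ξ)) - t (A (s ξ))‖ + ‖η‖ * ‖s (A (t ξ)) - s (T (t ξ))‖ := by
            gcongr <;> exact norm_inner_le_norm _ _
      _ = ‖η‖ * ‖t (T (s ξ) - A (s ξ))‖ + ‖η‖ * ‖s (A (t ξ) - T (t ξ))‖ := by
            rw [map_sub, map_sub]
      _ ≤ ‖η‖ * (‖t‖ * ‖T (s ξ) - A (s ξ)‖) + ‖η‖ * (‖s‖ * ‖A (t ξ) - T (t ξ)‖) := by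
            gcongr <;> exact le_opNorm _ _
      _ ≤ ‖η‖ * (‖t‖ * ε) + ‖η‖ * (‖s‖ * ε) := by
            have h1' : ‖T (s ξ) - A (s ξ)‖ ≤ ε := by rw [norm_sub_rev]; exact le_of_lt h1
            have h2' : ‖A (t ξ) - T (t ξ)‖ ≤ ε := le_of_lt h2
            gcongr
      _ = (‖η‖ * ‖t‖ + ‖η‖ * ‖s‖) * ε := by ring
    have hD0 : D = 0 := by
      by_contra hne
      have hpos : 0 < ‖D‖ := norm_pos_iff.mpr hne
      set C : ℝ := ‖η‖ * ‖t‖ + ‖η‖ * ‖s‖ with hC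
      have hCnn : 0 ≤ C := by positivity
      have := hbound (‖D‖ / (2 * (C + 1))) (by positivity)
      have hlt : C * (‖D‖ / (2 * (C + 1))) < ‖D‖ := by
        rw [div_eq_mul_inv]
        rw [show C * (‖D‖ * (2 * (C + 1))⁻¹) = ‖D‖ * (C / (2 * (C + 1))) by ring]
        have : C / (2 * (C + 1)) < 1 := by
          rw [div_lt_one (by positivity)]
          linarith
        nlinarith
      linarith
    have : ⟪η, t (T (s ξ))⟫ = ⟪η, s (T (t ξ))⟫ := by
      have := sub_eq_zero.mp hD0
      exact this
    exact this
  -- step (c): rank-one operators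
  obtain ⟨ζ₀, hζ₀⟩ : ∃ ζ₀, t ζ₀ ≠ 0 := by
    by_contra hcon
    push_neg at hcon
    exact htne (by ext ζ; simpa using hcon ζ)
  have hnorm : (0 : ℝ) < ‖t ζ₀‖ ^ 2 := pow_pos (norm_pos_iff.mpr hζ₀) 2
  refine ⟨⟪t ζ₀, s ζ₀⟫ / (‖t ζ₀‖ : ℂ) ^ 2, ?_⟩
  ext ζ
  have hT := hb ((innerSL ℂ (t ζ₀)).smulRight ζ)
  have happ := congrFun (congrArg (fun f : H →L[ℂ] H => (f : H → H)) hT) ζ₀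
  simp only [ContinuousLinearMap.comp_apply, ContinuousLinearMap.smulRight_apply,
    innerSL_apply_apply, map_smul] at happ
  -- happ : ⟪t ζ₀, s ζ₀⟫ • t ζ = ⟪t ζ₀, t ζ₀⟫ • s ζ
  have hinner : ⟪t ζ₀, t ζ₀⟫ = ((‖t ζ₀‖ : ℂ)) ^ 2 := inner_self_eq_norm_sq_to_K _
  rw [hinner] at happ
  have hne : ((‖t ζ₀‖ : ℂ)) ^ 2 ≠ 0 := by
    intro h
    have h2 : (‖t ζ₀‖ : ℂ) = 0 := pow_eq_zero_iff (by norm_num : (2 : ℕ) ≠ 0) |>.mp h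
    exact hζ₀ (norm_eq_zero.mp (by exact_mod_cast h2))
  simp only [ContinuousLinearMap.smul_apply]
  have happ2 : s ζ = ((‖t ζ₀‖ : ℂ) ^ 2)⁻¹ • (⟪t ζ₀, s ζ₀⟫ • t ζ) := by
    rw [happ, smul_smul, inv_mul_cancel₀ hne, one_smul]
  rw [happ2, smul_smul, inv_mul_eq_div]


theorem mainLemma (hfactor : ∀ x : H →L[ℂ] H, x ∈ M → x ∈ M.commutant →
      ∃ c : ℂ, x = c • (1 : H →L[ℂ] H))
    {ι : Type*} (y : ι → (H →L[ℂ] H)) (hy : LinearIndependent ℂ y)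
    (hyM : ∀ i, y i ∈ M) (s : Finset ι) :
    ∀ x : ι → (H →L[ℂ] H), (∀ i, x i ∈ M.commutant) →
      (∑ i ∈ s, x i * y i) = 0 → ∀ k ∈ s, x k = 0 := by
  classical
  induction s using Finset.strongInduction with
  | _ s ih =>
    intro x hx hsum k hk
    by_contra hxk
    -- commutator relations vanish by the inductive hypothesis
    have hrel : ∀ b, b ∈ M.commutant → ∀ i ∈ s, x k * b * x i = x i * b * x k := by
      intro b hb i hi
      by_cases hik : i = k
      · subst hik; rfl
      · have hsum2 : ∑ j ∈ s.erase k, (x k * b * x j - x j * b * x k) * y j = 0 := by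
          have e0 : ∀ j ∈ s, (x k * b * x j - x j * b * x k) * y j
              = (x k * b) * (x j * y j) - (x j * y j) * (b * x k) := by
            intro j hj
            have hyb : y j * b = b * y j := VonNeumannAlgebra.mem_commutant_iff.mp hb (y j) (hyM j)
            have hyxk : y j * x k = x k * y j :=
              VonNeumannAlgebra.mem_commutant_iff.mp (hx k) (y j) (hyM j)
            have : (x j * b * x k) * y j = (x j * y j) * (b * x k) := by
              calc (x j * b * x k) * y j = x j * b * (x k * y j) := by noncomm_ring
              _ = x j * b * (y j * x k) := by rw [hyxk]
              _ = x j * (b * y j) * x k := by noncomm_ring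
              _ = x j * (y j * b) * x k := by rw [hyb]
              _ = (x j * y j) * (b * x k) := by noncomm_ring
            rw [sub_mul, this]
            noncomm_ring
          have e1 : ∑ j ∈ s, (x k * b * x j - x j * b * x k) * y j = 0 := by
            rw [Finset.sum_congr rfl e0, Finset.sum_sub_distrib, ← Finset.mul_sum,
              ← Finset.sum_mul, hsum]
            simp
          rw [← e1]
          apply Finset.sum_subset (Finset.erase_subset k s)
          intro j hj hj2
          have : j = k := by
            by_contra hjk
            exact hj2 (Finset.mem_erase.mpr ⟨hjk, hj⟩)
          subst this
          simp
        have := ih (s.erase k) (Finset.erase_ssubset hk)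
          (fun j => x k * b * x j - x j * b * x k)
          (fun j => sub_mem (mul_mem (mul_mem (hx k) hb) (hx j))
            (mul_mem (mul_mem (hx j) hb) (hx k))) hsum2 i
          (Finset.mem_erase.mpr ⟨hik, hi⟩)
        exact sub_eq_zero.mp this
    -- each x i is proportional to x k
    have hprop : ∀ i ∈ s, ∃ c : ℂ, x i = c • x k := by
      intro i hi
      exact lemC M hfactor (hx k) (hx i) hxk (fun b hb => hrel b hb i hi)
    choose! c hc using hprop
    -- normalize: the coefficient at k can be taken to be 1
    set c' : ι → ℂ := fun i => if i = k then 1 else c i with hc'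
    have hc'eq : ∀ i ∈ s, x i = c' i • x k := by
      intro i hi
      by_cases hik : i = k
      · subst hik; simp [hc']
      · simp only [hc', if_neg hik]
        exact hc i hi
    -- conclude a linear relation among the y i
    have hw : x k * (∑ i ∈ s, c' i • y i) = 0 := by
      rw [Finset.mul_sum]
      rw [← hsum]
      apply Finset.sum_congr rfl
      intro i hi
      rw [hc'eq i hi, mul_smul_comm, smul_mul_assoc]
    have hwM : (∑ i ∈ s, c' i • y i) ∈ M := by
      apply sum_mem
      intro i _
      have h1 : (c' i • (1 : H →L[ℂ] H)) ∈ M := by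
        have h2 := M.toStarSubalgebra.algebraMap_mem (c' i)
        rwa [Algebra.algebraMap_eq_smul_one] at h2
      have h3 : c' i • y i = (c' i • (1 : H →L[ℂ] H)) * y i := by
        rw [smul_mul_assoc, one_mul]
      rw [h3]
      exact mul_mem h1 (hyM i)
    have hy0 : (∑ i ∈ s, c' i • y i) = 0 := lemA'' M hfactor (hx k) hwM hw hxk
    have := linearIndependent_iff'.mp hy s c' hy0 k hk
    simp [hc'] at this
  

end Stmt9Aux

universe v

/-- Abstract form of the final assembly. -/
theorem tensor_inj_aux {R : Type*} [Ring R] [Algebra ℂ R]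
    {A : Type*} {B : Type v} [AddCommGroup A] [Module ℂ A] [AddCommGroup B] [Module ℂ B]
    (fA : A →ₗ[ℂ] R) (fB : B →ₗ[ℂ] R)
    (hfA : Function.Injective fA) (hfB : Function.Injective fB)
    (μ : A ⊗[ℂ] B →ₗ[ℂ] R)
    (hμ : ∀ a b, μ (a ⊗ₜ[ℂ] b) = fA a * fB b)
    (hmain : ∀ (ι : Type v) (y : ι → R), LinearIndependent ℂ y →
      (∀ i, y i ∈ Set.range fB) → ∀ (s : Finset ι) (x : ι → R), (∀ i, x i ∈ Set.range fA) →
      (∑ i ∈ s, x i * y i) = 0 → ∀ k ∈ s, x k = 0) :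
    Function.Injective μ := by
  classical
  rw [← LinearMap.ker_eq_bot, Submodule.eq_bot_iff]
  intro τ hτ
  rw [LinearMap.mem_ker] at hτ
  let bb := Module.Basis.ofVectorSpace ℂ B
  let ι := Module.Basis.ofVectorSpaceIndex ℂ B
  let e1 : (A ⊗[ℂ] B) ≃ₗ[ℂ] (A ⊗[ℂ] (ι →₀ ℂ)) :=
    TensorProduct.congr (LinearEquiv.refl ℂ A) bb.repr
  let e2 : (A ⊗[ℂ] (ι →₀ ℂ)) ≃ₗ[ℂ] (ι →₀ A) :=
    TensorProduct.finsuppScalarRight ℂ ℂ A ι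
  set f : ι →₀ A := e2 (e1 τ) with hf
  have hj : ∀ j : ι, e2 (e1 ((f j) ⊗ₜ[ℂ] (bb j : B))) = Finsupp.single j (f j) := by
    intro j
    have h1 : e1 ((f j) ⊗ₜ[ℂ] (bb j : B)) = (f j) ⊗ₜ[ℂ] (Finsupp.single j 1) := by
      show TensorProduct.congr (LinearEquiv.refl ℂ A) bb.repr ((f j) ⊗ₜ[ℂ] (bb j : B)) = _
      rw [TensorProduct.congr_tmul]
      rw [Module.Basis.repr_self]
      rfl
    rw [h1]
    have h2 := TensorProduct.finsuppScalarRight_symm_apply_single (R := ℂ) (S := ℂ) (M := A)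
      (ι := ι) j (f j)
    calc e2 ((f j) ⊗ₜ[ℂ] (Finsupp.single j 1)) = e2 (e2.symm (Finsupp.single j (f j))) := by
          rw [h2]
    _ = Finsupp.single j (f j) := e2.apply_symm_apply _
  have hτeq : τ = ∑ j ∈ f.support, (f j) ⊗ₜ[ℂ] (bb j : B) := by
    have h3 : e2 (e1 (∑ j ∈ f.support, (f j) ⊗ₜ[ℂ] (bb j : B))) = f := by
      rw [map_sum, map_sum, Finset.sum_congr rfl (fun j _ => hj j)]
      exact Finsupp.sum_single f
    apply e1.injective
    apply e2.injective
    rw [h3, ← hf]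
  have hsum : ∑ j ∈ f.support, fA (f j) * fB (bb j : B) = 0 := by
    have : μ τ = ∑ j ∈ f.support, fA (f j) * fB (bb j : B) := by
      rw [hτeq, map_sum, Finset.sum_congr rfl (fun j _ => hμ (f j) (bb j))]
    rw [← this, hτ]
  have hli : LinearIndependent ℂ (fun j : ι => fB (bb j : B)) :=
    bb.linearIndependent.map' fB (LinearMap.ker_eq_bot.mpr hfB)
  have hz := hmain ι (fun j => fB (bb j : B)) hli (fun j => ⟨bb j, rfl⟩) f.support
    (fun j => fA (f j)) (fun j => ⟨f j, rfl⟩) hsum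
  have hf0 : f = 0 := by
    ext j
    by_cases hjs : j ∈ f.support
    · exact hfA (by simpa using hz j hjs)
    · simpa using Finsupp.notMem_support_iff.mp hjs
  have h4 : e1 τ = 0 := by
    apply e2.injective
    rw [← hf, hf0, map_zero]
  have h5 := e1.injective (by rw [h4, map_zero] : e1 τ = e1 0)
  simpa using h5


/-- If `M ⊆ B(H)` is a factor (a von Neumann algebra with `M ∩ M' = ℂ·1`), then the
multiplication map `M' ⊙ M → B(H)`, `a ⊗ b ↦ a·b`, on the algebraic tensor product is
injective. -/
theorem stmt_9 {H : Type*} [NormedAddCommGroup H] [InnerProductSpace ℂ H]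
    [CompleteSpace H]
    (M : VonNeumannAlgebra H)
    (hfactor : ∀ x : H →L[ℂ] H, x ∈ M → x ∈ M.commutant →
      ∃ c : ℂ, x = c • (1 : H →L[ℂ] H))
    (μ : (↥(VonNeumannAlgebra.commutant M).toStarSubalgebra ⊗[ℂ]
          ↥M.toStarSubalgebra) →ₗ[ℂ] (H →L[ℂ] H))
    (hμ : ∀ (a : (VonNeumannAlgebra.commutant M).toStarSubalgebra)
            (b : M.toStarSubalgebra),
      μ (a ⊗ₜ[ℂ] b) = (a : H →L[ℂ] H) * (b : H →L[ℂ] H)) :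
    Function.Injective μ := by
  classical
  let fA : ↥(VonNeumannAlgebra.commutant M).toStarSubalgebra →ₗ[ℂ] (H →L[ℂ] H) :=
    { toFun := fun a => (a : H →L[ℂ] H)
      map_add' := fun _ _ => rfl
      map_smul' := fun _ _ => rfl }
  let fB : ↥M.toStarSubalgebra →ₗ[ℂ] (H →L[ℂ] H) :=
    { toFun := fun b => (b : H →L[ℂ] H)
      map_add' := fun _ _ => rfl
      map_smul' := fun _ _ => rfl }
  apply tensor_inj_aux fA fB
  · exact fun a b hab => Subtype.ext hab
  · exact fun a b hab => Subtype.ext hab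
  · exact hμ
  · intro ι y hli hyr s x hxr hsum k hk
    refine Stmt9Aux.mainLemma M hfactor y hli (fun i => ?_) s x (fun i => ?_) hsum k hk
    · obtain ⟨b, hb⟩ := hyr i
      rw [← hb]
      exact b.2
    · obtain ⟨a, ha⟩ := hxr i
      rw [← ha]
      exact a.2
end
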